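/- Let G be a finite group with identity e and let S be a subset of G containing e such that |S| divides |G|. Suppose there exist a finite group H with identity e' and a bijection φ : H → S such that φ(e') = e and Θ_G(S) = φ̂(Θ(H)^{|G|/|H|}). Then S is a subgroup of G, φ is either a group isomorphism or a group anti-isomorphism from H onto S (i.e., either φ(h h') = φ(h) φ(h') for all h, h' ∈ H, or φ(h h') = φ(h') φ(h) for all h, h' ∈ H), and in particular the subgroup S is isomorphic to H. -/

import Mathlib

/-- The group determinant `Θ(G)` of a finite group `G`. -/
noncomputable def groupDet (R G : Type*) [CommRing R] [Group G] [Finite G] :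
    MvPolynomial G R := by
  classical
  letI := Fintype.ofFinite G
  exact Matrix.det (Matrix.of fun g h : G => MvPolynomial.X (g * h⁻¹))

/-- The generalized group determinant `Θ_G(S)` of a finite group `G` to a subset `S ⊆ G`. -/
noncomputable def genGroupDet (R G : Type*) [CommRing R] [Group G] [Finite G] (S : Set G) :
    MvPolynomial S R := by
  classical
  letI := Fintype.ofFinite G
  exact Matrix.det (Matrix.of fun g h : G =>
    if hm : g * h⁻¹ ∈ S then MvPolynomial.X (⟨g * h⁻¹, hm⟩ : S) else 0)




section Scott

variable {H G : Type*} [Group H] [Group G] {f : H → G}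

private lemma scott_sq (hf : ∀ x y : H, f (x*y) = f x * f y ∨ f (x*y) = f y * f x)
    (x : H) : f (x*x) = f x * f x := by
  rcases hf x x with h | h <;> exact h

/-- commuting elements have commuting images -/
private lemma scott_comm_aux (hf : ∀ x y : H, f (x*y) = f x * f y ∨ f (x*y) = f y * f x)
    {x y : H} (hc : x*y = y*x) (hp : f (x*y) = f x * f y) : f x * f y = f y * f x := by
  by_contra hne
  have h1 : f (x*(y*y)) = f x * (f y * f y) := by
    rcases hf x (y*y) with h2 | h2
    · rw [h2, scott_sq hf]
    · rcases hf (x*y) y with h | h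
      · have e : x*(y*y) = x*y*y := by group
        rw [e, h, hp]; group
      · exfalso
        have e : x*(y*y) = x*y*y := by group
        rw [e, h, hp] at h2
        -- f y * (f x * f y) = f (y*y) * f x
        rw [scott_sq hf] at h2
        have h2' : f y * (f x * f y) = f y * (f y * f x) := by
          rw [h2]; group
        exact hne (mul_left_cancel h2')
  have h2 : f ((x*y)*(x*y)) = (f x * f y) * (f x * f y) := by
    rw [scott_sq hf (x*y), hp]
  have hel : x*y*(x*y) = x*(x*(y*y)) := by
    have e : y*(x*y) = x*(y*y) := by rw [← mul_assoc, ← hc, mul_assoc]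
    rw [mul_assoc, e]
  rcases hf x (x*(y*y)) with h3 | h3
  · rw [h1, ← hel, h2] at h3
    -- (uv)(uv) = u(u(vv))
    have h4 : f x * (f y * (f x * f y)) = f x * (f x * (f y * f y)) := by
      rw [← h3]; group
    have h5 := mul_left_cancel h4
    have h6 : (f y * f x) * f y = (f x * f y) * f y := by
      rw [mul_assoc, mul_assoc]; exact h5
    exact hne (mul_right_cancel h6).symm
  · rw [h1, ← hel, h2] at h3
    -- (uv)(uv) = (u(vv))u
    have h4 : f x * (f y * (f x * f y)) = f x * (f y * (f y * f x)) := by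
      calc f x * (f y * (f x * f y)) = f x * f y * (f x * f y) := by group
      _ = f x * (f y * f y) * f x := h3
      _ = f x * (f y * (f y * f x)) := by group
    exact hne (mul_left_cancel (mul_left_cancel h4))

private lemma scott_comm (hf : ∀ x y : H, f (x*y) = f x * f y ∨ f (x*y) = f y * f x)
    {x y : H} (hc : x*y = y*x) : f x * f y = f y * f x := by
  rcases hf x y with h | h
  · exact scott_comm_aux hf hc h
  · have h' : f (y*x) = f y * f x := by rw [← hc, h]
    exact (scott_comm_aux hf hc.symm h').symm

/-- flip lemma for the homomorphism case -/
private lemma scott_flipP (hinj : Function.Injective f)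
    (hf : ∀ x y : H, f (x*y) = f x * f y ∨ f (x*y) = f y * f x)
    {x y : H} (h : f (x*y) = f x * f y) : f (y*x) = f y * f x := by
  by_cases hc : f x * f y = f y * f x
  · rcases hf y x with h2 | h2
    · exact h2
    · rw [h2, hc]
  · have hxy : x*y ≠ y*x := fun hh => hc (scott_comm hf hh)
    rcases hf y x with h2 | h2
    · exact h2
    · exfalso; exact hxy (hinj (h.trans h2.symm))

private lemma scott_flipN (hinj : Function.Injective f)
    (hf : ∀ x y : H, f (x*y) = f x * f y ∨ f (x*y) = f y * f x)
    {x y : H} (h : f (x*y) = f y * f x) : f (y*x) = f x * f y := by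
  by_cases hc : f x * f y = f y * f x
  · rcases hf y x with h2 | h2
    · exact h2.trans hc.symm
    · exact h2
  · have hxy : x*y ≠ y*x := fun hh => hc (scott_comm hf hh)
    rcases hf y x with h2 | h2
    · exfalso; exact hxy (hinj (h.trans h2.symm))
    · exact h2

end Scott

section Scott2
variable {H G : Type*} [Group H] [Group G] {f : H → G}

private lemma scott_star1 (hinj : Function.Injective f)
    (hf : ∀ x y : H, f (x*y) = f x * f y ∨ f (x*y) = f y * f x)
    {a b x : H} (hab : f (a*b) = f a * f b) (hncab : f a * f b ≠ f b * f a)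
    (hax : f (a*x) = f x * f a) (hncax : f a * f x ≠ f x * f a) :
    f b * f a * f x = f x * (f a * f b) := by
  by_contra hstar
  have hba : f (b*a) = f b * f a := scott_flipP hinj hf hab
  have hxa : f (x*a) = f a * f x := scott_flipN hinj hf hax
  have e1 : b*(a*x) = b*a*x := by group
  have comXB : f x * f b = f b * f x := by
    rcases hf (b*a) x with h1 | h1 <;> rcases hf b (a*x) with h2 | h2
    · exfalso
      rw [e1, h1, hba, hax] at h2
      have h2' : f b * (f a * f x) = f b * (f x * f a) := by
        calc f b * (f a * f x) = f b * f a * f x := by group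
        _ = f b * (f x * f a) := h2
      exact hncax (mul_left_cancel h2')
    · exfalso
      rw [e1, h1, hba, hax] at h2
      apply hstar
      calc f b * f a * f x = f x * f a * f b := h2
      _ = f x * (f a * f b) := by group
    · rw [e1, h1, hba, hax] at h2
      have h2' : f x * f b * f a = f b * f x * f a := by
        calc f x * f b * f a = f x * (f b * f a) := by group
        _ = f b * (f x * f a) := h2
        _ = f b * f x * f a := by group
      exact mul_right_cancel h2'
    · exfalso
      rw [e1, h1, hba, hax] at h2
      have h2' : f x * (f b * f a) = f x * (f a * f b) := by
        calc f x * (f b * f a) = f x * f a * f b := h2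
        _ = f x * (f a * f b) := by group
      exact hncab (mul_left_cancel h2').symm
  have hbx : f (b*x) = f b * f x := by
    rcases hf b x with h | h
    · exact h
    · exact h.trans comXB
  have e2 : x*(a*b) = x*a*b := by group
  have hval : f (x*(a*b)) = f (a*b) * f x := by
    rcases hf (x*a) b with g1 | g1 <;> rcases hf x (a*b) with g2 | g2
    · exfalso
      rw [← e2, g2, hab] at g1
      rw [hxa] at g1
      have g1' : f x * f a * f b = f a * f x * f b := by
        calc f x * f a * f b = f x * (f a * f b) := by group
        _ = f a * f x * f b := g1
      exact hncax (mul_right_cancel g1').symm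
    · exact g2
    · exfalso
      rw [← e2, g2, hab, hxa] at g1
      apply hstar
      calc f b * f a * f x = f b * (f a * f x) := by group
      _ = f x * (f a * f b) := g1.symm
    · exact g2
  have hK : f ((a*b)*x) = f x * f (a*b) := scott_flipN hinj hf hval
  have e3 : a*(b*x) = (a*b)*x := by group
  rcases hf a (b*x) with h4 | h4
  · rw [e3, hK, hab, hbx] at h4
    have h5 : f x * f a * f b = f a * f x * f b := by
      calc f x * f a * f b = f x * (f a * f b) := by group
      _ = f a * (f b * f x) := h4
      _ = f a * (f x * f b) := by rw [← comXB]
      _ = f a * f x * f b := by group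
    exact hncax (mul_right_cancel h5).symm
  · rw [e3, hK, hab, hbx] at h4
    have h5 : f x * (f a * f b) = f x * (f b * f a) := by
      calc f x * (f a * f b) = f b * f x * f a := h4
      _ = f x * f b * f a := by rw [← comXB]
      _ = f x * (f b * f a) := by group
    exact hncab (mul_left_cancel h5)

private lemma scott_ba2 (hinj : Function.Injective f)
    (hf : ∀ x y : H, f (x*y) = f x * f y ∨ f (x*y) = f y * f x)
    {a b : H} (hab : f (a*b) = f a * f b) (hncab : f a * f b ≠ f b * f a) :
    f (b*(a*a)) = f b * (f a * f a) := by
  have hba : f (b*a) = f b * f a := scott_flipP hinj hf hab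
  have e : b*(a*a) = (b*a)*a := by group
  rcases hf b (a*a) with h2 | h2
  · rw [h2, scott_sq hf]
  · rw [scott_sq hf] at h2
    rcases hf (b*a) a with h | h
    · rw [e, h, hba]; group
    · exfalso
      rw [← e, h2] at h
      rw [hba] at h
      -- fa*fa*fb = fa*(fb*fa)
      have h' : f a * (f a * f b) = f a * (f b * f a) := by
        calc f a * (f a * f b) = f a * f a * f b := by group
        _ = f a * (f b * f a) := by rw [h]
      exact hncab (mul_left_cancel h')

private lemma scott_rowspread (hinj : Function.Injective f)
    (hf : ∀ x y : H, f (x*y) = f x * f y ∨ f (x*y) = f y * f x)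
    {a b : H} (hab : f (a*b) = f a * f b) (hncab : f a * f b ≠ f b * f a) :
    ∀ x, f (a*x) = f a * f x := by
  intro x
  rcases hf a x with h | h
  · exact h
  by_cases hc : f a * f x = f x * f a
  · exact h.trans hc.symm
  exfalso
  have hstar := scott_star1 hinj hf hab hncab h hc
  have hba2 : f (b*(a*a)) = f b * (f a * f a) := scott_ba2 hinj hf hab hncab
  have hxa : f (x*a) = f a * f x := scott_flipN hinj hf h
  have hba : f (b*a) = f b * f a := scott_flipP hinj hf hab
  -- value of f ((b*a)*(a*x)) is f b * f a * f x * f a in both cases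
  have hW : f ((b*a)*(a*x)) = f b * f a * f x * f a := by
    rcases hf (b*a) (a*x) with h1 | h1
    · rw [h1, hba, h]; group
    · rw [h1, hba, h]
      calc f x * f a * (f b * f a) = f x * (f a * f b) * f a := by group
      _ = f b * f a * f x * f a := by rw [← hstar]
  have e : (b*a)*(a*x) = (b*(a*a))*x := by group
  rw [e] at hW
  rcases hf (b*(a*a)) x with h2 | h2
  · rw [hW, hba2] at h2
    have h2' : f b * f a * (f x * f a) = f b * f a * (f a * f x) := by
      calc f b * f a * (f x * f a) = f b * f a * f x * f a := by group
      _ = f b * (f a * f a) * f x := h2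
      _ = f b * f a * (f a * f x) := by group
    exact hc (mul_left_cancel h2').symm
  · rw [hW, hba2] at h2
    have h2' : f x * (f a * f b) * f a = f x * (f b * f a) * f a := by
      calc f x * (f a * f b) * f a = f b * f a * f x * f a := by rw [hstar]
      _ = f x * (f b * (f a * f a)) := h2
      _ = f x * (f b * f a) * f a := by group
    exact hncab (mul_left_cancel (mul_right_cancel h2'))

end Scott2

section Scott3
variable {H G : Type*} [Group H] [Group G] {f : H → G}

private lemma scott_colspreadN (hinj : Function.Injective f)
    (hf : ∀ x y : H, f (x*y) = f x * f y ∨ f (x*y) = f y * f x)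
    {u v : H} (h1 : f (v*u) = f u * f v) (h2 : f u * f v ≠ f v * f u) :
    ∀ t, f (t*u) = f u * f t := by
  have inj'' : Function.Injective (fun z : Hᵐᵒᵖ => f z.unop) :=
    fun z w hw => MulOpposite.unop_injective (hinj hw)
  have hf'' : ∀ X Y : Hᵐᵒᵖ, (fun z : Hᵐᵒᵖ => f z.unop) (X*Y) =
      (fun z : Hᵐᵒᵖ => f z.unop) X * (fun z : Hᵐᵒᵖ => f z.unop) Y ∨
      (fun z : Hᵐᵒᵖ => f z.unop) (X*Y) =
      (fun z : Hᵐᵒᵖ => f z.unop) Y * (fun z : Hᵐᵒᵖ => f z.unop) X := by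
    intro X Y
    simp only [MulOpposite.unop_mul]
    exact (hf Y.unop X.unop).symm
  have hp : (fun z : Hᵐᵒᵖ => f z.unop) (MulOpposite.op u * MulOpposite.op v) =
      (fun z : Hᵐᵒᵖ => f z.unop) (MulOpposite.op u) *
      (fun z : Hᵐᵒᵖ => f z.unop) (MulOpposite.op v) := by
    simp only [MulOpposite.unop_mul, MulOpposite.unop_op]
    exact h1
  intro t
  have := scott_rowspread inj'' hf'' hp (by simpa using h2) (MulOpposite.op t)
  simpa using this

private lemma scott_core (hinj : Function.Injective f)
    (hf : ∀ x y : H, f (x*y) = f x * f y ∨ f (x*y) = f y * f x)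
    (hP : ∃ a b : H, f (a*b) = f a * f b ∧ f a * f b ≠ f b * f a) :
    ∀ x y : H, f (x*y) = f x * f y := by
  obtain ⟨a, b, hab, hnc⟩ := hP
  intro x y
  rcases hf x y with h | h
  · exact h
  by_cases hc : f x * f y = f y * f x
  · exact h.trans hc.symm
  exfalso
  have RSa : ∀ t, f (a*t) = f a * f t := scott_rowspread hinj hf hab hnc
  have hba : f (b*a) = f b * f a := scott_flipP hinj hf hab
  have RSb : ∀ t, f (b*t) = f b * f t :=
    scott_rowspread hinj hf hba (fun hh => hnc hh.symm)
  have CSb : ∀ t, f (t*b) = f t * f b := fun t => scott_flipP hinj hf (RSb t)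
  have hyx : f (y*x) = f x * f y := scott_flipN hinj hf h
  have CSNy : ∀ t, f (t*y) = f y * f t :=
    scott_colspreadN hinj hf (u := y) (v := x) h (fun hh => hc hh.symm)
  have CSNx : ∀ t, f (t*x) = f x * f t :=
    scott_colspreadN hinj hf (u := x) (v := y) hyx hc
  have RSNx : ∀ t, f (x*t) = f t * f x := fun t => scott_flipN hinj hf (CSNx t)
  have comAY : f a * f y = f y * f a := (RSa y).symm.trans (CSNy a)
  have comBX : f x * f b = f b * f x := (CSb x).symm.trans (RSNx b)
  have hby : f (b*y) = f b * f y := RSb y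
  have hV : f (a*(x*(b*y))) = f a * (f b * f y * f x) := by
    rw [RSa, RSNx (b*y), hby]
  have e : (a*x)*(b*y) = a*(x*(b*y)) := by group
  have hax : f (a*x) = f a * f x := RSa x
  rcases hf (a*x) (b*y) with h5 | h5
  · rw [e, hV, hax, hby] at h5
    have h6 : f a * (f b * (f y * f x)) = f a * (f b * (f x * f y)) := by
      calc f a * (f b * (f y * f x)) = f a * (f b * f y * f x) := by group
      _ = f a * f x * (f b * f y) := h5
      _ = f a * (f x * f b * f y) := by group
      _ = f a * (f b * f x * f y) := by rw [comBX]
      _ = f a * (f b * (f x * f y)) := by group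
    exact hc (mul_left_cancel (mul_left_cancel h6)).symm
  · rw [e, hV, hax, hby] at h5
    have h6 : f a * f b * (f y * f x) = f b * f a * (f y * f x) := by
      calc f a * f b * (f y * f x) = f a * (f b * f y * f x) := by group
      _ = f b * f y * (f a * f x) := h5
      _ = f b * (f y * f a) * f x := by group
      _ = f b * (f a * f y) * f x := by rw [comAY]
      _ = f b * f a * (f y * f x) := by group
    exact hnc (mul_right_cancel h6)

/-- Scott's half-homomorphism theorem for injective maps. -/
theorem scott_theorem (hinj : Function.Injective f)
    (hf : ∀ x y : H, f (x*y) = f x * f y ∨ f (x*y) = f y * f x) :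
    (∀ x y : H, f (x*y) = f x * f y) ∨ (∀ x y : H, f (x*y) = f y * f x) := by
  by_cases hP : ∃ a b : H, f (a*b) = f a * f b ∧ f a * f b ≠ f b * f a
  · exact Or.inl (scott_core hinj hf hP)
  · push_neg at hP
    refine Or.inr fun x y => ?_
    rcases hf x y with h | h
    · rw [h, hP x y h]
    · exact h

end Scott3

open Finset

section FinsuppHelp
variable {G : Type*} [DecidableEq G] [One G]

private def del (s t : G) : ℕ := if s = t then 1 else 0

private lemma del_self (s : G) : del s s = 1 := if_pos rfl
private lemma del_of_ne {s t : G} (h : s ≠ t) : del s t = 0 := if_neg h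
private lemma eq_of_del {s t : G} (h : del s t ≠ 0) : s = t := by
  by_contra hc; exact h (del_of_ne hc)
private lemma del_le_one (s t : G) : del s t ≤ 1 := by
  unfold del; split <;> omega

private lemma pair2 {B C Y Z : G}
    (hval : ∀ t : G, t ≠ 1 → del B t + del C t = del Y t + del Z t)
    (hB : B ≠ 1) (hC : C ≠ 1) (hY : Y ≠ 1) (hZ : Z ≠ 1) :
    (B = Y ∧ C = Z) ∨ (B = Z ∧ C = Y) := by
  have h1 := hval Y hY
  rw [del_self] at h1
  have hBCY : B = Y ∨ C = Y := by
    by_contra hcon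
    push_neg at hcon
    rw [del_of_ne hcon.1, del_of_ne hcon.2] at h1
    omega
  rcases hBCY with hBY | hCY
  · subst hBY
    left
    refine ⟨rfl, ?_⟩
    have h2 := hval C hC
    rw [del_self] at h2
    have : del Z C ≠ 0 := by
      have := del_le_one B C
      omega
    exact (eq_of_del this).symm
  · subst hCY
    right
    refine ⟨?_, rfl⟩
    have h2 := hval B hB
    rw [del_self] at h2
    have : del Z B ≠ 0 := by
      have := del_le_one C B
      omega
    exact (eq_of_del this).symm

private lemma pair_match {u v : G →₀ ℕ} (huv : ∀ t : G, t ≠ 1 → u t = v t)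
    {A B C D : G} (hA : A ≠ 1) (hB : B ≠ 1) (hC : C ≠ 1) (hD : D ≠ 1)
    (heq : u + Finsupp.single A 1 + Finsupp.single B 1
         = v + Finsupp.single C 1 + Finsupp.single D 1) :
    (A = C ∧ B = D) ∨ (A = D ∧ B = C) := by
  have hval : ∀ t : G, t ≠ 1 → del A t + del B t = del C t + del D t := by
    intro t ht
    have h0 := congrArg (fun w : G →₀ ℕ => w t) heq
    simp only [Finsupp.add_apply, Finsupp.single_apply] at h0
    rw [huv t ht] at h0
    unfold del
    omega
  exact pair2 hval hA hB hC hD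

private lemma triple_match {u v : G →₀ ℕ} (huv : ∀ t : G, t ≠ 1 → u t = v t)
    {A B C X Y Z : G} (hA : A ≠ 1) (hB : B ≠ 1) (hC : C ≠ 1)
    (hX : X ≠ 1) (hY : Y ≠ 1) (hZ : Z ≠ 1)
    (heq : u + Finsupp.single A 1 + Finsupp.single B 1 + Finsupp.single C 1
         = v + Finsupp.single X 1 + Finsupp.single Y 1 + Finsupp.single Z 1) :
    (A = X ∧ B = Y ∧ C = Z) ∨ (A = X ∧ B = Z ∧ C = Y) ∨
    (A = Y ∧ B = X ∧ C = Z) ∨ (A = Y ∧ B = Z ∧ C = X) ∨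
    (A = Z ∧ B = X ∧ C = Y) ∨ (A = Z ∧ B = Y ∧ C = X) := by
  have hval : ∀ t : G, t ≠ 1 →
      del A t + del B t + del C t = del X t + del Y t + del Z t := by
    intro t ht
    have h0 := congrArg (fun w : G →₀ ℕ => w t) heq
    simp only [Finsupp.add_apply, Finsupp.single_apply] at h0
    rw [huv t ht] at h0
    unfold del
    omega
  have h1 := hval X hX
  rw [del_self] at h1
  have hfirst : A = X ∨ B = X ∨ C = X := by
    by_contra hcon
    push_neg at hcon
    rw [del_of_ne hcon.1, del_of_ne hcon.2.1, del_of_ne hcon.2.2] at h1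
    omega
  rcases hfirst with hAX | hBX | hCX
  · subst hAX
    have hval2 : ∀ t : G, t ≠ 1 → del B t + del C t = del Y t + del Z t := by
      intro t ht
      have := hval t ht
      omega
    rcases pair2 hval2 hB hC hY hZ with ⟨e1, e2⟩ | ⟨e1, e2⟩
    · exact Or.inl ⟨rfl, e1, e2⟩
    · exact Or.inr (Or.inl ⟨rfl, e1, e2⟩)
  · subst hBX
    have hval2 : ∀ t : G, t ≠ 1 → del A t + del C t = del Y t + del Z t := by
      intro t ht
      have := hval t ht
      omega
    rcases pair2 hval2 hA hC hY hZ with ⟨e1, e2⟩ | ⟨e1, e2⟩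
    · exact Or.inr (Or.inr (Or.inl ⟨e1, rfl, e2⟩))
    · exact Or.inr (Or.inr (Or.inr (Or.inr (Or.inl ⟨e1, rfl, e2⟩))))
  · subst hCX
    have hval2 : ∀ t : G, t ≠ 1 → del A t + del B t = del Y t + del Z t := by
      intro t ht
      have := hval t ht
      omega
    rcases pair2 hval2 hA hB hY hZ with ⟨e1, e2⟩ | ⟨e1, e2⟩
    · exact Or.inr (Or.inr (Or.inr (Or.inl ⟨e1, e2, rfl⟩)))
    · exact Or.inr (Or.inr (Or.inr (Or.inr (Or.inr ⟨e1, e2, rfl⟩))))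

end FinsuppHelp

noncomputable def scEfun {α G : Type*} [Fintype α] (f : α → G) : G →₀ ℕ :=
  ∑ x, Finsupp.single (f x) 1

lemma scEfun_def {α G : Type*} [Fintype α] (f : α → G) :
    scEfun f = ∑ x, Finsupp.single (f x) 1 := rfl

section EfunSec
variable {α G : Type*} [Fintype α] [Group G]

lemma scEfun_apply [DecidableEq G] (f : α → G) (a : G) :
    scEfun f a = (univ.filter fun x => f x = a).card := by
  classical
  rw [scEfun, Finsupp.finset_sum_apply, Finset.card_filter]
  refine Finset.sum_congr rfl fun x _ => ?_
  simp [Finsupp.single_apply]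

lemma scEfun_two [DecidableEq α] (f : α → G) (p q : α) (hpq : p ≠ q)
    (h1 : ∀ x, x ≠ p → x ≠ q → f x = 1) :
    scEfun f = (Fintype.card α - 2) • Finsupp.single (1:G) 1
      + Finsupp.single (f p) 1 + Finsupp.single (f q) 1 := by
  classical
  have hsub : ({p, q} : Finset α) ⊆ univ := subset_univ _
  rw [scEfun, ← Finset.sum_sdiff hsub]
  have h2 : ∑ x ∈ univ \ {p,q}, Finsupp.single (f x) 1
      = (Fintype.card α - 2) • Finsupp.single (1:G) 1 := by
    calc ∑ x ∈ univ \ {p,q}, Finsupp.single (f x) 1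
        = ∑ _x ∈ univ \ {p,q}, Finsupp.single (1:G) 1 := by
          refine Finset.sum_congr rfl fun x hx => ?_
          rw [Finset.mem_sdiff, Finset.mem_insert, Finset.mem_singleton] at hx
          push_neg at hx
          rw [h1 x hx.2.1 hx.2.2]
    _ = (Fintype.card α - 2) • Finsupp.single (1:G) 1 := by
          rw [Finset.sum_const, Finset.card_sdiff_of_subset hsub, Finset.card_univ,
            Finset.card_pair hpq]
  have h3 : ∑ x ∈ ({p,q} : Finset α), Finsupp.single (f x) 1
      = Finsupp.single (f p) 1 + Finsupp.single (f q) 1 := Finset.sum_pair hpq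
  rw [h2, h3, add_assoc]

lemma scEfun_three [DecidableEq α] (f : α → G) (p q r : α)
    (hpq : p ≠ q) (hqr : q ≠ r) (hpr : p ≠ r)
    (h1 : ∀ x, x ≠ p → x ≠ q → x ≠ r → f x = 1) :
    scEfun f = (Fintype.card α - 3) • Finsupp.single (1:G) 1
      + Finsupp.single (f p) 1 + Finsupp.single (f q) 1 + Finsupp.single (f r) 1 := by
  classical
  have hsub : ({p, q, r} : Finset α) ⊆ univ := subset_univ _
  rw [scEfun, ← Finset.sum_sdiff hsub]
  have hcard : ({p, q, r} : Finset α).card = 3 := by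
    rw [Finset.card_insert_of_notMem (by simp [hpq, hpr]),
      Finset.card_pair hqr]
  have h2 : ∑ x ∈ univ \ {p,q,r}, Finsupp.single (f x) 1
      = (Fintype.card α - 3) • Finsupp.single (1:G) 1 := by
    calc ∑ x ∈ univ \ {p,q,r}, Finsupp.single (f x) 1
        = ∑ _x ∈ univ \ {p,q,r}, Finsupp.single (1:G) 1 := by
          refine Finset.sum_congr rfl fun x hx => ?_
          rw [Finset.mem_sdiff, Finset.mem_insert, Finset.mem_insert,
            Finset.mem_singleton] at hx
          push_neg at hx
          rw [h1 x hx.2.1 hx.2.2.1 hx.2.2.2]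
    _ = (Fintype.card α - 3) • Finsupp.single (1:G) 1 := by
          rw [Finset.sum_const, Finset.card_sdiff_of_subset hsub, Finset.card_univ, hcard]
  have h3 : ∑ x ∈ ({p,q,r} : Finset α), Finsupp.single (f x) 1
      = Finsupp.single (f p) 1 + Finsupp.single (f q) 1 + Finsupp.single (f r) 1 := by
    rw [Finset.sum_insert (by simp [hpq, hpr]), Finset.sum_pair hqr, add_assoc]
  rw [h2, h3]
  abel

lemma scEfun_perm_one {K : Type*} [Fintype K] [Group K] [DecidableEq K]
    (j : K → G) (hj1 : j 1 = 1) (hji : Function.Injective j) (σ : Equiv.Perm K) :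
    scEfun (fun g => j (σ g * g⁻¹)) 1 = Fintype.card K - σ.support.card := by
  classical
  rw [scEfun_apply]
  have hfe : (univ.filter fun g => j (σ g * g⁻¹) = 1) = univ.filter fun g => σ g = g := by
    refine Finset.filter_congr fun g _ => ?_
    rw [show (1:G) = j 1 from hj1.symm, hji.eq_iff, mul_inv_eq_one]
  rw [hfe]
  have hs := Finset.card_filter_add_card_filter_not
    (s := (univ : Finset K)) (p := fun g => σ g = g)
  have hsupp : σ.support.card = (univ.filter fun g => ¬ σ g = g).card := rfl
  rw [Finset.card_univ] at hs
  rw [hsupp]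
  omega

lemma scEfun_const_one : scEfun (fun _ : α => (1:G)) = Fintype.card α • Finsupp.single (1:G) 1 := by
  rw [scEfun, Finset.sum_const, Finset.card_univ]

private lemma sum_eq_singleton {m : ℕ} {c : Fin m → ℕ} {d : ℕ} (hsum : ∑ i, c i = d)
    (hne : ∀ i, c i ≠ 1) (hd : 2 ≤ d) (hd3 : d ≤ 3) :
    ∃ i₀, c i₀ = d ∧ ∀ j, j ≠ i₀ → c j = 0 := by
  have hex : ∃ i₀, c i₀ ≠ 0 := by
    by_contra h
    push_neg at h
    rw [Finset.sum_eq_zero (fun i _ => h i)] at hsum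
    omega
  obtain ⟨i₀, h0⟩ := hex
  have hsplit := Finset.add_sum_erase univ c (mem_univ i₀)
  have hc2 : 2 ≤ c i₀ := by have := hne i₀; omega
  have hjz : ∀ j, j ≠ i₀ → c j = 0 := by
    intro j hj
    have hjle : c j ≤ ∑ x ∈ univ.erase i₀, c x :=
      Finset.single_le_sum (fun i _ => Nat.zero_le _) (by simp [hj])
    have := hne j
    omega
  have hz : ∑ j ∈ univ.erase i₀, c j = 0 :=
    Finset.sum_eq_zero (fun j hj => hjz j (Finset.mem_erase.mp hj).1)
  refine ⟨i₀, by omega, hjz⟩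

end EfunSec
private lemma det_instance_irrel {n : Type*} (i1 i2 : Fintype n) (d1 d2 : DecidableEq n)
    {R : Type*} [CommRing R] (M : Matrix n n R) :
    @Matrix.det n d1 i1 R _ M = @Matrix.det n d2 i2 R _ M := by
  have h1 : i1 = i2 := Subsingleton.elim _ _
  have h2 : d1 = d2 := by
    funext a b
    exact Subsingleton.elim _ _
  cases h1; cases h2; rfl

private lemma genGroupDet_unfold {G : Type*} [Group G] [Fintype G] [DecidableEq G]
    (S : Set G) [DecidablePred (· ∈ S)] :
    genGroupDet ℂ G S = Matrix.det (Matrix.of fun g h : G =>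
      if hm : g * h⁻¹ ∈ S then (MvPolynomial.X (⟨g * h⁻¹, hm⟩ : S) : MvPolynomial S ℂ)
      else 0) := by
  unfold genGroupDet
  rw [det_instance_irrel (Fintype.ofFinite G) ‹Fintype G›
    (fun a b => Classical.propDecidable _) ‹DecidableEq G›]
  congr 1
  funext g h
  simp only [Matrix.of_apply]
  congr 1

private lemma groupDet_unfold {H : Type*} [Group H] [Fintype H] [DecidableEq H] :
    groupDet ℂ H = Matrix.det (Matrix.of fun g h : H =>
      (MvPolynomial.X (g * h⁻¹) : MvPolynomial H ℂ)) := by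
  unfold groupDet
  rw [det_instance_irrel (Fintype.ofFinite H) ‹Fintype H›
    (fun a b => Classical.propDecidable _) ‹DecidableEq H›]

open Finset MvPolynomial

private lemma prod_X_monomial {α G : Type*} (s : Finset α) (f : α → G) :
    (∏ x ∈ s, (MvPolynomial.X (f x) : MvPolynomial G ℂ))
      = MvPolynomial.monomial (∑ x ∈ s, Finsupp.single (f x) 1) 1 := by
  classical
  induction s using Finset.cons_induction with
  | empty => simp
  | cons a s ha ih =>
    rw [Finset.prod_cons, Finset.sum_cons, ih,
      show (MvPolynomial.X (f a) : MvPolynomial G ℂ)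
        = MvPolynomial.monomial (Finsupp.single (f a) 1) 1 from rfl,
      MvPolynomial.monomial_mul, one_mul]

section CSec
variable {G : Type*} [Group G] [Fintype G] [DecidableEq G] (S : Set G) [DecidablePred (· ∈ S)]

private lemma rename_genGroupDet :
    MvPolynomial.rename (Subtype.val : S → G) (genGroupDet ℂ G S)
      = ∑ σ : Equiv.Perm G, (Equiv.Perm.sign σ : ℤ) •
          ∏ g : G, (if (σ g) * g⁻¹ ∈ S then (MvPolynomial.X ((σ g) * g⁻¹) : MvPolynomial G ℂ)
            else 0) := by
  rw [genGroupDet_unfold, Matrix.det_apply, map_sum]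
  refine Finset.sum_congr rfl fun σ _ => ?_
  rw [Units.smul_def, map_zsmul]
  congr 1
  rw [map_prod]
  refine Finset.prod_congr rfl fun g _ => ?_
  rw [Matrix.of_apply, apply_dite (MvPolynomial.rename (Subtype.val : S → G))]
  split_ifs with hm
  · rw [MvPolynomial.rename_X]
  · rw [map_zero]

private lemma exists_perm_of_coeff {ν : G →₀ ℕ}
    (h : MvPolynomial.coeff ν
      (MvPolynomial.rename (Subtype.val : S → G) (genGroupDet ℂ G S)) ≠ 0) :
    ∃ σ : Equiv.Perm G, scEfun (fun g => (σ g) * g⁻¹) = ν := by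
  rw [rename_genGroupDet, MvPolynomial.coeff_sum] at h
  obtain ⟨σ, -, hσ⟩ := Finset.exists_ne_zero_of_sum_ne_zero h
  refine ⟨σ, ?_⟩
  by_contra hne
  apply hσ
  rw [MvPolynomial.coeff_smul]
  by_cases hall : ∀ g : G, (σ g) * g⁻¹ ∈ S
  · rw [Finset.prod_congr rfl (fun g _ => if_pos (hall g)), prod_X_monomial,
      ← scEfun_def, MvPolynomial.coeff_monomial, if_neg hne]
    simp
  · push_neg at hall
    obtain ⟨g₀, hg₀⟩ := hall
    have hz : (if σ g₀ * g₀⁻¹ ∈ S then (MvPolynomial.X (σ g₀ * g₀⁻¹) : MvPolynomial G ℂ)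
        else 0) = 0 := if_neg hg₀
    rw [Finset.prod_eq_zero (Finset.mem_univ g₀) hz]
    simp

private lemma rename_groupDet {H : Type*} [Group H] [Fintype H] [DecidableEq H] (ι : H → G) :
    MvPolynomial.rename ι (groupDet ℂ H)
      = ∑ τ : Equiv.Perm H, (Equiv.Perm.sign τ : ℤ) •
          (MvPolynomial.monomial (scEfun fun h => ι ((τ h) * h⁻¹)) (1:ℂ)) := by
  rw [groupDet_unfold, Matrix.det_apply, map_sum]
  refine Finset.sum_congr rfl fun τ _ => ?_
  rw [Units.smul_def, map_zsmul]
  congr 1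
  rw [map_prod,
    Finset.prod_congr rfl (fun h _ => by rw [Matrix.of_apply, MvPolynomial.rename_X]),
    prod_X_monomial]
  rfl

end CSec

section DSec
variable {G : Type*} [Group G] [DecidableEq G]

private lemma prod_zsmul_monomial {β : Type*} (s : Finset β) (c : β → ℤ)
    (dd : β → (G →₀ ℕ)) :
    (∏ i ∈ s, (c i) • (MvPolynomial.monomial (dd i) (1:ℂ)))
      = (∏ i ∈ s, c i) • MvPolynomial.monomial (∑ i ∈ s, dd i) (1:ℂ) := by
  classical
  induction s using Finset.cons_induction with
  | empty => simp
  | cons a s ha ih =>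
    rw [Finset.prod_cons, Finset.prod_cons, Finset.sum_cons, ih,
      smul_mul_smul_comm, MvPolynomial.monomial_mul, one_mul]

private lemma coeff_pow_expansion {H : Type*} [Group H] [Fintype H] [DecidableEq H]
    (ι : H → G) (m : ℕ) (ν : G →₀ ℕ) :
    MvPolynomial.coeff ν
      ((∑ τ : Equiv.Perm H, (Equiv.Perm.sign τ : ℤ) •
        (MvPolynomial.monomial (scEfun fun h => ι ((τ h) * h⁻¹)) (1:ℂ)))^m)
      = ∑ t ∈ Fintype.piFinset (fun _ : Fin m => (Finset.univ : Finset (Equiv.Perm H))),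
          if (∑ i, scEfun (fun h => ι ((t i h) * h⁻¹))) = ν
          then ((∏ i, (Equiv.Perm.sign (t i) : ℤ)) : ℂ) else 0 := by
  rw [← Fin.prod_const m, Finset.prod_univ_sum, MvPolynomial.coeff_sum]
  refine Finset.sum_congr rfl fun t _ => ?_
  rw [prod_zsmul_monomial, MvPolynomial.coeff_smul, MvPolynomial.coeff_monomial]
  split_ifs with hcond
  · rw [zsmul_eq_mul, mul_one]
    push_cast
    rfl
  · simp

end DSec

section ESec
variable {G : Type*} [Group G] [DecidableEq G]

private lemma coeff_pow_ne_zero {H : Type*} [Group H] [Fintype H] [DecidableEq H]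
    (ι : H → G) (hι1 : ι 1 = 1) (hιinj : Function.Injective ι)
    (m d : ℕ) (hm : 1 ≤ m) (hd2 : 2 ≤ d) (hd3 : d ≤ 3)
    (τ₀ : Equiv.Perm H) (hτ₀ : τ₀.support.card = d) :
    MvPolynomial.coeff
      (scEfun (fun h => ι ((τ₀ h) * h⁻¹))
        + (m-1) • (Fintype.card H • Finsupp.single (1:G) 1))
      ((∑ τ : Equiv.Perm H, (Equiv.Perm.sign τ : ℤ) •
        (MvPolynomial.monomial (scEfun fun h => ι ((τ h) * h⁻¹)) (1:ℂ)))^m) ≠ 0 := by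
  set k := Fintype.card H with hk
  set ν : G →₀ ℕ := scEfun (fun h => ι ((τ₀ h) * h⁻¹))
    + (m-1) • (k • Finsupp.single (1:G) 1) with hν
  rw [coeff_pow_expansion]
  have hi₀ : (0:ℕ) < m := hm
  set i₀ : Fin m := ⟨0, hi₀⟩ with hi₀def
  have hEone : scEfun (fun h : H => ι (((1 : Equiv.Perm H) h) * h⁻¹))
      = k • Finsupp.single (1:G) 1 := by
    have h2 : (fun h : H => ι (((1 : Equiv.Perm H) h) * h⁻¹)) = fun _ : H => (1:G) := by
      funext h
      simp [hι1]
    rw [h2, scEfun_const_one]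
  -- the distinguished tuple
  have hcond0 : (∑ i, scEfun (fun h => ι (((fun j : Fin m => if j = i₀ then τ₀ else 1) i h)
      * h⁻¹))) = ν := by
    have hterm : ∀ i : Fin m,
        scEfun (fun h => ι (((fun j : Fin m => if j = i₀ then τ₀ else 1) i h) * h⁻¹))
        = if i = i₀ then scEfun (fun h => ι ((τ₀ h) * h⁻¹))
          else k • Finsupp.single (1:G) 1 := by
      intro i
      by_cases hi : i = i₀
      · subst hi
        simp
      · simp only [if_neg hi]
        exact hEone
    rw [Finset.sum_congr rfl (fun i _ => hterm i), Finset.sum_ite, Finset.filter_eq',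
      if_pos (Finset.mem_univ i₀), Finset.sum_singleton, Finset.sum_const, Finset.filter_ne',
      Finset.card_erase_of_mem (Finset.mem_univ i₀), Finset.card_univ, Fintype.card_fin, hν]
  have hdk : d ≤ k := by
    rw [← hτ₀]
    exact Finset.card_le_univ _
  have hν1 : ν 1 = (k - d) + (m-1) * k := by
    rw [hν, Finsupp.add_apply, Finsupp.smul_apply, Finsupp.smul_apply,
      Finsupp.single_eq_same, scEfun_perm_one ι hι1 hιinj τ₀, hτ₀]
    simp [mul_comm]
    rfl
  have hsign : ∀ t : Fin m → Equiv.Perm H,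
      ((∑ i, scEfun (fun h => ι ((t i h) * h⁻¹))) = ν) →
      (∏ i, (Equiv.Perm.sign (t i) : ℤ)) = (if d = 2 then -1 else 1) := by
    intro t hcnd
    have h1 : ∑ i, (k - (t i).support.card) = ν 1 := by
      have h0 := congrArg (fun w : G →₀ ℕ => w 1) hcnd
      simp only [Finsupp.finset_sum_apply] at h0
      rw [← h0]
      exact Finset.sum_congr rfl fun i _ => (scEfun_perm_one ι hι1 hιinj (t i)).symm
    have hsum : ∑ i, (t i).support.card = d := by
      have hle : ∀ i, (t i).support.card ≤ k := fun i => Finset.card_le_univ _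
      have e1' : ∀ i ∈ Finset.univ, (k - (t i).support.card) + (t i).support.card = k :=
        fun i _ => by have := hle i; omega
      have e1 : ∑ i, ((k - (t i).support.card) + (t i).support.card) = m * k := by
        rw [Finset.sum_congr rfl e1', Finset.sum_const, Finset.card_univ,
          Fintype.card_fin, smul_eq_mul]
      rw [Finset.sum_add_distrib, h1, hν1] at e1
      obtain ⟨m', rfl⟩ : ∃ m', m = m' + 1 := ⟨m - 1, by omega⟩
      have e3 : (m' + 1) - 1 = m' := by omega
      have e2 : (m' + 1) * k = k + m' * k := by ring
      rw [e3, e2] at e1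
      generalize m' * k = B at e1
      omega
    obtain ⟨i₁, hi₁, hz⟩ := sum_eq_singleton hsum
      (fun i => Equiv.Perm.card_support_ne_one (t i)) hd2 hd3
    rw [Finset.prod_eq_single i₁ (fun j _ hj => by
        have hzz : (t j).support.card = 0 := hz j hj
        rw [Finset.card_eq_zero, Equiv.Perm.support_eq_empty_iff] at hzz
        rw [hzz]
        simp) (fun hni => absurd (Finset.mem_univ i₁) hni)]
    have hd23 : d = 2 ∨ d = 3 := by omega
    rcases hd23 with rfl | rfl
    · obtain ⟨x, y, hxy, hts⟩ := Equiv.Perm.card_support_eq_two.mp hi₁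
      rw [hts, Equiv.Perm.sign_swap hxy]
      simp
    · have h3 := (card_support_eq_three_iff.mp hi₁).sign
      rw [h3]
      simp
  have hrw : (∑ t ∈ Fintype.piFinset (fun _ : Fin m => (Finset.univ : Finset (Equiv.Perm H))),
        if (∑ i, scEfun (fun h => ι ((t i h) * h⁻¹))) = ν
        then ((∏ i, (Equiv.Perm.sign (t i) : ℤ)) : ℂ) else 0)
      = ∑ t ∈ Fintype.piFinset (fun _ : Fin m => (Finset.univ : Finset (Equiv.Perm H))),
        if (∑ i, scEfun (fun h => ι ((t i h) * h⁻¹))) = ν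
        then (((if d = 2 then -1 else 1 : ℤ)) : ℂ) else 0 := by
    refine Finset.sum_congr rfl fun t _ => ?_
    by_cases hc : (∑ i, scEfun (fun h => ι ((t i h) * h⁻¹))) = ν
    · have hs := hsign t hc
      rw [if_pos hc, if_pos hc]
      exact_mod_cast congrArg (fun z : ℤ => (z : ℂ)) hs
    · rw [if_neg hc, if_neg hc]
  rw [hrw, ← Finset.sum_filter, Finset.sum_const]
  have hmem : (fun j : Fin m => if j = i₀ then τ₀ else 1) ∈
      (Fintype.piFinset (fun _ : Fin m => (Finset.univ : Finset (Equiv.Perm H)))).filter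
      (fun t => (∑ i, scEfun (fun h => ι ((t i h) * h⁻¹))) = ν) := by
    rw [Finset.mem_filter]
    exact ⟨by simp, hcond0⟩
  have hcardpos : 0 < ((Fintype.piFinset (fun _ : Fin m =>
      (Finset.univ : Finset (Equiv.Perm H)))).filter
      (fun t => (∑ i, scEfun (fun h => ι ((t i h) * h⁻¹))) = ν)).card :=
    Finset.card_pos.mpr ⟨_, hmem⟩
  have hsne : (((if d = 2 then -1 else 1 : ℤ)) : ℂ) ≠ 0 := by
    split_ifs <;> norm_num
  have hcne : (((Fintype.piFinset (fun _ : Fin m =>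
      (Finset.univ : Finset (Equiv.Perm H)))).filter
      (fun t => (∑ i, scEfun (fun h => ι ((t i h) * h⁻¹))) = ν)).card : ℕ) ≠ 0 :=
    Nat.pos_iff_ne_zero.mp hcardpos
  simp only [nsmul_eq_mul]
  exact mul_ne_zero (Nat.cast_ne_zero.mpr hcne) hsne

end ESec

section FSec
variable {K : Type*} [DecidableEq K] [Fintype K]

private lemma threecycle_structure {σ : Equiv.Perm K} (h3 : σ.support.card = 3) :
    ∃ p q r : K, p ≠ q ∧ q ≠ r ∧ p ≠ r ∧ σ p = q ∧ σ q = r ∧ σ r = p ∧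
      σ.support = {p, q, r} := by
  have hne : σ.support.Nonempty := by
    rw [← Finset.card_pos, h3]; omega
  obtain ⟨p, hp⟩ := hne
  have hpp : σ p ≠ p := Equiv.Perm.mem_support.mp hp
  have hqmem : σ p ∈ σ.support := Equiv.Perm.apply_mem_support.mpr hp
  have hqq : σ (σ p) ≠ σ p := Equiv.Perm.mem_support.mp hqmem
  have hrmem : σ (σ p) ∈ σ.support := Equiv.Perm.apply_mem_support.mpr hqmem
  have hpq : p ≠ σ p := fun h => hpp h.symm
  have hqr : σ p ≠ σ (σ p) := fun h => hqq h.symm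
  have hpr : p ≠ σ (σ p) := by
    intro h
    -- then σ (σ p) = p ; find a third point s
    have hcard2 : ({p, σ p} : Finset K).card = 2 := Finset.card_pair hpq
    have hsub : ({p, σ p} : Finset K) ⊆ σ.support := by
      intro t ht
      rcases Finset.mem_insert.mp ht with rfl | ht
      · exact hp
      · rw [Finset.mem_singleton] at ht
        exact ht ▸ hqmem
    have hpos : 0 < (σ.support \ {p, σ p}).card := by
      rw [Finset.card_sdiff_of_subset hsub, h3, hcard2]
      omega
    obtain ⟨s, hs⟩ := Finset.card_pos.mp hpos
    rw [Finset.mem_sdiff, Finset.mem_insert, Finset.mem_singleton] at hs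
    obtain ⟨hsmem, hsn⟩ := hs
    push_neg at hsn
    obtain ⟨hsp, hsq⟩ := hsn
    have hcard3 : ({p, σ p, s} : Finset K).card = 3 := by
      rw [Finset.card_insert_of_notMem (by
        rw [Finset.mem_insert, Finset.mem_singleton]
        push_neg
        exact ⟨hpq, fun hh => hsp hh.symm⟩), Finset.card_pair (fun hh => hsq hh.symm)]
    have hsupp_eq : ({p, σ p, s} : Finset K) = σ.support := by
      apply Finset.eq_of_subset_of_card_le
      · intro t ht
        rcases Finset.mem_insert.mp ht with rfl | ht
        · exact hp
        rcases Finset.mem_insert.mp ht with rfl | ht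
        · exact hqmem
        · rw [Finset.mem_singleton] at ht
          exact ht ▸ hsmem
      · rw [h3, hcard3]
    have hss : σ s ≠ s := Equiv.Perm.mem_support.mp hsmem
    have hsmem2 : σ s ∈ ({p, σ p, s} : Finset K) := by
      rw [hsupp_eq]
      exact Equiv.Perm.apply_mem_support.mpr hsmem
    rw [Finset.mem_insert, Finset.mem_insert, Finset.mem_singleton] at hsmem2
    rcases hsmem2 with h1 | h1 | h1
    · -- σ s = p = σ (σ p) ⟹ s = σ p
      have : s = σ p := σ.injective (h1.trans h)
      exact hsq this
    · have : s = p := σ.injective h1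
      exact hsp this
    · exact hss h1
  have hsupp : σ.support = {p, σ p, σ (σ p)} := by
    have hcard3 : ({p, σ p, σ (σ p)} : Finset K).card = 3 := by
      rw [Finset.card_insert_of_notMem (by
        rw [Finset.mem_insert, Finset.mem_singleton]
        push_neg
        exact ⟨hpq, hpr⟩), Finset.card_pair hqr]
    refine (Finset.eq_of_subset_of_card_le ?_ (by rw [h3, hcard3])).symm
    intro t ht
    rcases Finset.mem_insert.mp ht with rfl | ht
    · exact hp
    rcases Finset.mem_insert.mp ht with rfl | ht
    · exact hqmem
    · rw [Finset.mem_singleton] at ht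
      exact ht ▸ hrmem
  have hrr : σ (σ (σ p)) ≠ σ (σ p) := Equiv.Perm.mem_support.mp hrmem
  have hr3 : σ (σ (σ p)) ∈ σ.support := Equiv.Perm.apply_mem_support.mpr hrmem
  rw [hsupp, Finset.mem_insert, Finset.mem_insert, Finset.mem_singleton] at hr3
  have hσr : σ (σ (σ p)) = p := by
    rcases hr3 with h1 | h1 | h1
    · exact h1
    · exact absurd (σ.injective h1) (fun hh => hpr hh.symm)
    · exact absurd h1 hrr
  exact ⟨p, σ p, σ (σ p), hpq, hqr, hpr, rfl, rfl, hσr, hsupp⟩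

end FSec

section GSec
variable {G : Type*} [Group G] [Fintype G] [DecidableEq G] (S : Set G)
  [DecidablePred (· ∈ S)]
variable {H : Type*} [Group H] [Fintype H] [DecidableEq H] (ι : H → G)

private lemma nu_at_one (hι1 : ι 1 = 1) (hιinj : Function.Injective ι)
    (m d : ℕ) (τ₀ : Equiv.Perm H) (hτ₀ : τ₀.support.card = d) :
    ((scEfun (fun h => ι ((τ₀ h) * h⁻¹))
      + (m-1) • (Fintype.card H • Finsupp.single (1:G) 1) : G →₀ ℕ)) 1
      = (Fintype.card H - d) + (m-1) * Fintype.card H := by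
  rw [Finsupp.add_apply, Finsupp.smul_apply, Finsupp.smul_apply,
    Finsupp.single_eq_same, scEfun_perm_one ι hι1 hιinj τ₀, hτ₀]
  simp [mul_comm]

private lemma exists_perm_match
    (hpoly : MvPolynomial.rename (Subtype.val : S → G) (genGroupDet ℂ G S)
      = (∑ τ : Equiv.Perm H, (Equiv.Perm.sign τ : ℤ) •
        (MvPolynomial.monomial (scEfun fun h => ι ((τ h) * h⁻¹)) (1:ℂ)))^m)
    (hι1 : ι 1 = 1) (hιinj : Function.Injective ι)
    (hm : 1 ≤ m) (hcard : Fintype.card G = m * Fintype.card H)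
    {d : ℕ} (hd2 : 2 ≤ d) (hd3 : d ≤ 3)
    (τ₀ : Equiv.Perm H) (hτ₀ : τ₀.support.card = d) :
    ∃ σ : Equiv.Perm G, σ.support.card = d ∧
      scEfun (fun g => σ g * g⁻¹)
        = scEfun (fun h => ι ((τ₀ h) * h⁻¹))
          + (m-1) • (Fintype.card H • Finsupp.single (1:G) 1) := by
  have h1 : MvPolynomial.coeff
      (scEfun (fun h => ι ((τ₀ h) * h⁻¹))
        + (m-1) • (Fintype.card H • Finsupp.single (1:G) 1))
      (MvPolynomial.rename (Subtype.val : S → G) (genGroupDet ℂ G S)) ≠ 0 := by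
    rw [hpoly]
    exact coeff_pow_ne_zero ι hι1 hιinj m d hm hd2 hd3 τ₀ hτ₀
  obtain ⟨σ, hσ⟩ := exists_perm_of_coeff S h1
  refine ⟨σ, ?_, hσ⟩
  have e1 : Fintype.card G - σ.support.card
      = ((scEfun (fun h => ι ((τ₀ h) * h⁻¹))
        + (m-1) • (Fintype.card H • Finsupp.single (1:G) 1) : G →₀ ℕ)) 1 := by
    rw [← hσ]
    exact (scEfun_perm_one (fun g : G => g) rfl (fun a b hab => hab) σ).symm
  rw [nu_at_one ι hι1 hιinj m d τ₀ hτ₀] at e1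
  have hsle : σ.support.card ≤ Fintype.card G := Finset.card_le_univ _
  have hdk : d ≤ Fintype.card H := by
    rw [← hτ₀]; exact Finset.card_le_univ _
  obtain ⟨m', rfl⟩ : ∃ m', m = m' + 1 := ⟨m - 1, by omega⟩
  have e3 : (m' + 1) - 1 = m' := by omega
  rw [e3] at e1
  have e2 : (m' + 1) * Fintype.card H = Fintype.card H + m' * Fintype.card H := by ring
  rw [e2] at hcard
  generalize m' * Fintype.card H = B at e1 hcard
  omega

end GSec

section HSec
variable {G : Type*} [Group G] [Fintype G] [DecidableEq G] (S : Set G)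
  [DecidablePred (· ∈ S)]
variable {H : Type*} [Group H] [Fintype H] [DecidableEq H] (ι : H → G) {m : ℕ}

private lemma iota_inv
    (hpoly : MvPolynomial.rename (Subtype.val : S → G) (genGroupDet ℂ G S)
      = (∑ τ : Equiv.Perm H, (Equiv.Perm.sign τ : ℤ) •
        (MvPolynomial.monomial (scEfun fun h => ι ((τ h) * h⁻¹)) (1:ℂ)))^m)
    (hι1 : ι 1 = 1) (hιinj : Function.Injective ι)
    (hm : 1 ≤ m) (hcard : Fintype.card G = m * Fintype.card H) :
    ∀ h0 : H, ι (h0⁻¹) = (ι h0)⁻¹ := by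
  intro h0
  by_cases h01 : h0 = 1
  · rw [h01, inv_one, hι1, inv_one]
  have h1h0 : (1:H) ≠ h0 := fun hh => h01 hh.symm
  have hτcard : (Equiv.swap (1:H) h0).support.card = 2 := by
    rw [Equiv.Perm.support_swap h1h0]
    exact Finset.card_pair h1h0
  obtain ⟨σ, hs2, heq⟩ := exists_perm_match S ι hpoly hι1 hιinj hm hcard
    (le_refl 2) (by omega) (Equiv.swap (1:H) h0) hτcard
  obtain ⟨p, q, hpq, hσswap⟩ := Equiv.Perm.card_support_eq_two.mp hs2
  have hGside : scEfun (fun g : G => σ g * g⁻¹)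
      = (Fintype.card G - 2) • Finsupp.single (1:G) 1
        + Finsupp.single (q * p⁻¹) 1 + Finsupp.single (p * q⁻¹) 1 := by
    have h2 := scEfun_two (fun g : G => σ g * g⁻¹) p q hpq (fun g hgp hgq => by
      show σ g * g⁻¹ = 1
      rw [hσswap, Equiv.swap_apply_of_ne_of_ne hgp hgq]
      simp)
    rw [h2]
    simp only [hσswap, Equiv.swap_apply_left, Equiv.swap_apply_right]
  have hHside : scEfun (fun h => ι ((Equiv.swap (1:H) h0) h * h⁻¹))
      = (Fintype.card H - 2) • Finsupp.single (1:G) 1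
        + Finsupp.single (ι h0) 1 + Finsupp.single (ι h0⁻¹) 1 := by
    have h2 := scEfun_two (fun h => ι ((Equiv.swap (1:H) h0) h * h⁻¹)) 1 h0 h1h0
      (fun g hg1 hgh0 => by
        show ι ((Equiv.swap (1:H) h0) g * g⁻¹) = 1
        rw [Equiv.swap_apply_of_ne_of_ne hg1 hgh0]
        simp [hι1])
    rw [h2]
    simp only [Equiv.swap_apply_left, Equiv.swap_apply_right, inv_one, mul_one, one_mul]
  rw [hGside, hHside] at heq
  have heq2 : (Fintype.card G - 2) • Finsupp.single (1:G) 1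
        + Finsupp.single (q * p⁻¹) 1 + Finsupp.single (p * q⁻¹) 1
      = ((Fintype.card H - 2) • Finsupp.single (1:G) 1
         + (m-1) • (Fintype.card H • Finsupp.single (1:G) 1))
        + Finsupp.single (ι h0) 1 + Finsupp.single (ι (h0⁻¹)) 1 := by
    rw [heq]; abel
  have hA : q * p⁻¹ ≠ 1 := fun hh => hpq (mul_inv_eq_one.mp hh).symm
  have hB : p * q⁻¹ ≠ 1 := fun hh => hpq (mul_inv_eq_one.mp hh)
  have hC : ι h0 ≠ 1 := fun hh => h01 (hιinj (hh.trans hι1.symm))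
  have hD : ι (h0⁻¹) ≠ 1 := fun hh => (inv_ne_one.mpr h01) (hιinj (hh.trans hι1.symm))
  have huv : ∀ t : G, t ≠ 1 →
      (((Fintype.card G - 2) • Finsupp.single (1:G) 1 : G →₀ ℕ)) t
      = ((((Fintype.card H - 2) • Finsupp.single (1:G) 1
         + (m-1) • (Fintype.card H • Finsupp.single (1:G) 1)) : G →₀ ℕ)) t := by
    intro t ht
    have h1t : ¬ (1:G) = t := fun hh => ht hh.symm
    simp [Finsupp.single_apply, h1t]
  rcases pair_match huv hA hB hC hD heq2 with ⟨e1, e2⟩ | ⟨e1, e2⟩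
  · rw [← e2, ← e1]; group
  · rw [← e1, ← e2]; group

end HSec

section ISec
variable {G : Type*} [Group G] [Fintype G] [DecidableEq G] (S : Set G)
  [DecidablePred (· ∈ S)]
variable {H : Type*} [Group H] [Fintype H] [DecidableEq H] (ι : H → G) {m : ℕ}

private lemma cyc3 {u v w : G} (h : u*(v*w) = 1) : w*(u*v) = 1 := by
  have h2 : (u*v)*w = 1 := by rw [mul_assoc]; exact h
  have h3 : w = (u*v)⁻¹ := eq_inv_of_mul_eq_one_right h2
  rw [h3]
  group

private lemma iota_triple
    (hpoly : MvPolynomial.rename (Subtype.val : S → G) (genGroupDet ℂ G S)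
      = (∑ τ : Equiv.Perm H, (Equiv.Perm.sign τ : ℤ) •
        (MvPolynomial.monomial (scEfun fun h => ι ((τ h) * h⁻¹)) (1:ℂ)))^m)
    (hι1 : ι 1 = 1) (hιinj : Function.Injective ι)
    (hm : 1 ≤ m) (hcard : Fintype.card G = m * Fintype.card H) :
    ∀ x y z : H, x ≠ 1 → y ≠ 1 → z ≠ 1 → z*(y*x) = 1 →
      ι z * (ι y * ι x) = 1 ∨ ι x * (ι y * ι z) = 1 := by
  intro x y z hx hy hz hzyx
  have hzw : z = (y*x)⁻¹ := eq_inv_of_mul_eq_one_left hzyx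
  have hw1 : y * x ≠ 1 := fun hh => hz (by rw [hzw, hh, inv_one])
  have h1x : (1:H) ≠ x := fun hh => hx hh.symm
  have hxw : x ≠ y * x := fun hh => hy (by
    have h2 : y * x = x := hh.symm
    rwa [mul_eq_right] at h2)
  have h1w : (1:H) ≠ y * x := fun hh => hw1 hh.symm
  set τ : Equiv.Perm H := Equiv.swap 1 x * Equiv.swap x (y*x) with hτ
  have hτ1 : τ 1 = x := by
    rw [hτ, Equiv.Perm.mul_apply, Equiv.swap_apply_of_ne_of_ne h1x h1w,
      Equiv.swap_apply_left]
  have hτx : τ x = y * x := by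
    rw [hτ, Equiv.Perm.mul_apply, Equiv.swap_apply_left,
      Equiv.swap_apply_of_ne_of_ne (fun hh => h1w hh.symm) (fun hh => hxw hh.symm)]
  have hτw : τ (y*x) = 1 := by
    rw [hτ, Equiv.Perm.mul_apply, Equiv.swap_apply_right, Equiv.swap_apply_right]
  have hτo : ∀ g, g ≠ 1 → g ≠ x → g ≠ y*x → τ g = g := by
    intro g hg1 hgx hgw
    rw [hτ, Equiv.Perm.mul_apply, Equiv.swap_apply_of_ne_of_ne hgx hgw,
      Equiv.swap_apply_of_ne_of_ne hg1 hgx]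
  have hsupp : τ.support = {1, x, y*x} := by
    ext g
    rw [Equiv.Perm.mem_support, Finset.mem_insert, Finset.mem_insert,
      Finset.mem_singleton]
    constructor
    · intro hg
      by_contra hcon
      push_neg at hcon
      exact hg (hτo g hcon.1 hcon.2.1 hcon.2.2)
    · intro hg
      rcases hg with rfl | rfl | rfl
      · rw [hτ1]; exact hx
      · rw [hτx]; exact fun hh => hxw hh.symm
      · rw [hτw]; exact h1w
  have hτcard : τ.support.card = 3 := by
    rw [hsupp, Finset.card_insert_of_notMem (by
        rw [Finset.mem_insert, Finset.mem_singleton]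
        push_neg
        exact ⟨h1x, h1w⟩),
      Finset.card_pair hxw]
  obtain ⟨σ, hs3, heq⟩ := exists_perm_match S ι hpoly hι1 hιinj hm hcard
    (by omega) (le_refl 3) τ hτcard
  obtain ⟨p, q, r, hpq, hqr, hpr, hσp, hσq, hσr, hσsupp⟩ := threecycle_structure hs3
  have hGside : scEfun (fun g : G => σ g * g⁻¹)
      = (Fintype.card G - 3) • Finsupp.single (1:G) 1
        + Finsupp.single (q * p⁻¹) 1 + Finsupp.single (r * q⁻¹) 1
        + Finsupp.single (p * r⁻¹) 1 := by
    have h2 := scEfun_three (fun g : G => σ g * g⁻¹) p q r hpq hqr hpr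
      (fun g hgp hgq hgr => by
        show σ g * g⁻¹ = 1
        have hfix : σ g = g := by
          have hns : g ∉ σ.support := by
            rw [hσsupp, Finset.mem_insert, Finset.mem_insert, Finset.mem_singleton]
            push_neg
            exact ⟨hgp, hgq, hgr⟩
          exact Equiv.Perm.notMem_support.mp hns
        rw [hfix]
        simp)
    rw [h2]
    simp only [hσp, hσq, hσr]
  have hHside : scEfun (fun h => ι (τ h * h⁻¹))
      = (Fintype.card H - 3) • Finsupp.single (1:G) 1
        + Finsupp.single (ι x) 1 + Finsupp.single (ι y) 1 + Finsupp.single (ι z) 1 := by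
    have h2 := scEfun_three (fun h => ι (τ h * h⁻¹)) 1 x (y*x) h1x hxw h1w
      (fun g hg1 hgx hgw => by
        show ι (τ g * g⁻¹) = 1
        rw [hτo g hg1 hgx hgw]
        simp [hι1])
    rw [h2]
    simp only [hτ1, hτx, hτw, inv_one, mul_one, one_mul]
    rw [show y * x * x⁻¹ = y from by group, ← hzw]
  rw [hGside, hHside] at heq
  have heq2 : (Fintype.card G - 3) • Finsupp.single (1:G) 1
        + Finsupp.single (q * p⁻¹) 1 + Finsupp.single (r * q⁻¹) 1
        + Finsupp.single (p * r⁻¹) 1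
      = ((Fintype.card H - 3) • Finsupp.single (1:G) 1
         + (m-1) • (Fintype.card H • Finsupp.single (1:G) 1))
        + Finsupp.single (ι x) 1 + Finsupp.single (ι y) 1 + Finsupp.single (ι z) 1 := by
    rw [heq]; abel
  have hA : q * p⁻¹ ≠ 1 := fun hh => hpq (mul_inv_eq_one.mp hh).symm
  have hB : r * q⁻¹ ≠ 1 := fun hh => hqr (mul_inv_eq_one.mp hh).symm
  have hC : p * r⁻¹ ≠ 1 := fun hh => hpr (mul_inv_eq_one.mp hh)
  have hX : ι x ≠ 1 := fun hh => hx (hιinj (hh.trans hι1.symm))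
  have hY : ι y ≠ 1 := fun hh => hy (hιinj (hh.trans hι1.symm))
  have hZ : ι z ≠ 1 := fun hh => hz (hιinj (hh.trans hι1.symm))
  have huv : ∀ t : G, t ≠ 1 →
      (((Fintype.card G - 3) • Finsupp.single (1:G) 1 : G →₀ ℕ)) t
      = ((((Fintype.card H - 3) • Finsupp.single (1:G) 1
         + (m-1) • (Fintype.card H • Finsupp.single (1:G) 1)) : G →₀ ℕ)) t := by
    intro t ht
    have h1t : ¬ (1:G) = t := fun hh => ht hh.symm
    simp [Finsupp.single_apply, h1t]
  have hprod : (p * r⁻¹) * ((r * q⁻¹) * (q * p⁻¹)) = 1 := by group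
  rcases triple_match huv hA hB hC hX hY hZ heq2 with
    ⟨e1,e2,e3⟩ | ⟨e1,e2,e3⟩ | ⟨e1,e2,e3⟩ | ⟨e1,e2,e3⟩ | ⟨e1,e2,e3⟩ | ⟨e1,e2,e3⟩
  · left; rw [← e1, ← e2, ← e3]; exact hprod
  · right
    have hrel : ι y * (ι z * ι x) = 1 := by rw [← e1, ← e2, ← e3]; exact hprod
    exact cyc3 hrel
  · right
    have hrel : ι z * (ι x * ι y) = 1 := by rw [← e1, ← e2, ← e3]; exact hprod
    exact cyc3 (cyc3 hrel)
  · left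
    have hrel : ι x * (ι z * ι y) = 1 := by rw [← e1, ← e2, ← e3]; exact hprod
    exact cyc3 (cyc3 hrel)
  · left
    have hrel : ι y * (ι x * ι z) = 1 := by rw [← e1, ← e2, ← e3]; exact hprod
    exact cyc3 hrel
  · right
    have hrel : ι x * (ι y * ι z) = 1 := by rw [← e1, ← e2, ← e3]; exact hprod
    exact hrel

end ISec

section JSec
variable {G : Type*} [Group G] [Fintype G] [DecidableEq G] (S : Set G)
  [DecidablePred (· ∈ S)]
variable {H : Type*} [Group H] [Fintype H] [DecidableEq H] (ι : H → G) {m : ℕ}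

private lemma iota_pointwise
    (hpoly : MvPolynomial.rename (Subtype.val : S → G) (genGroupDet ℂ G S)
      = (∑ τ : Equiv.Perm H, (Equiv.Perm.sign τ : ℤ) •
        (MvPolynomial.monomial (scEfun fun h => ι ((τ h) * h⁻¹)) (1:ℂ)))^m)
    (hι1 : ι 1 = 1) (hιinj : Function.Injective ι)
    (hm : 1 ≤ m) (hcard : Fintype.card G = m * Fintype.card H) :
    ∀ a b : H, ι (a*b) = ι a * ι b ∨ ι (a*b) = ι b * ι a := by
  have hINV := iota_inv S ι hpoly hι1 hιinj hm hcard
  intro a b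
  by_cases ha : a = 1
  · left; rw [ha, one_mul, hι1, one_mul]
  by_cases hb : b = 1
  · left; rw [hb, mul_one, hι1, mul_one]
  by_cases hab : a * b = 1
  · left
    have hba : b = a⁻¹ := eq_inv_of_mul_eq_one_right hab
    rw [hab, hι1, hba, hINV a]
    simp
  have h1 := iota_triple S ι hpoly hι1 hιinj hm hcard b a ((a*b)⁻¹) hb ha
    (inv_ne_one.mpr hab) (by group)
  rcases h1 with h2 | h2
  · left
    rw [hINV (a*b)] at h2
    exact inv_mul_eq_one.mp h2
  · right
    rw [hINV (a*b)] at h2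
    have h3 : (ι b * ι a) * (ι (a*b))⁻¹ = 1 := by
      rw [← h2]; group
    exact (mul_inv_eq_one.mp h3).symm

end JSec

private theorem aux_main {G : Type*} [Group G] [Fintype G]
    (S : Set G) (h1S : (1 : G) ∈ S) (hdvd : Nat.card S ∣ Fintype.card G)
    (H : Type*) [Group H] [Fintype H] (φ : H → S)
    (hbij : Function.Bijective φ) (h1 : φ 1 = ⟨1, h1S⟩)
    (hdet : genGroupDet ℂ G S =
      MvPolynomial.rename φ ((groupDet ℂ H) ^ (Fintype.card G / Fintype.card H))) :
    ((∀ a ∈ S, ∀ b ∈ S, a * b ∈ S) ∧ ∀ a ∈ S, a⁻¹ ∈ S) ∧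
    ((∀ h h' : H, (φ (h * h') : G) = (φ h : G) * (φ h' : G)) ∨
      (∀ h h' : H, (φ (h * h') : G) = (φ h' : G) * (φ h : G))) ∧
    (∃ ψ : H → G, Function.Injective ψ ∧ Set.range ψ = S ∧
      ∀ h h' : H, ψ (h * h') = ψ h * ψ h') := by
  classical
  set m := Fintype.card G / Fintype.card H with hmdef
  set ι : H → G := fun h => ((φ h : S) : G) with hιdef
  have hιinj : Function.Injective ι := fun a b hab =>
    hbij.1 (Subtype.val_injective hab)
  have hι1 : ι 1 = 1 := by
    show ((φ 1 : S) : G) = 1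
    rw [h1]
  have hrange : Set.range ι = S := by
    have e1 : ι = Subtype.val ∘ φ := rfl
    rw [e1, Set.range_comp, Set.range_eq_univ.mpr hbij.2, Set.image_univ,
      Subtype.range_coe]
  have hkcard : Nat.card ↥S = Fintype.card H := by
    rw [← Nat.card_eq_of_bijective φ hbij, Nat.card_eq_fintype_card]
  have hdvd' : Fintype.card H ∣ Fintype.card G := by
    rw [← hkcard]; exact hdvd
  have hmk : Fintype.card G = m * Fintype.card H := by
    rw [hmdef, Nat.div_mul_cancel hdvd']
  have hm1 : 1 ≤ m := by
    rw [hmdef]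
    exact Nat.div_pos (Nat.le_of_dvd Fintype.card_pos hdvd') Fintype.card_pos
  have hpoly : MvPolynomial.rename (Subtype.val : S → G) (genGroupDet ℂ G S)
      = (∑ τ : Equiv.Perm H, (Equiv.Perm.sign τ : ℤ) •
        (MvPolynomial.monomial (scEfun fun h => ι ((τ h) * h⁻¹)) (1:ℂ)))^m := by
    rw [hdet, MvPolynomial.rename_rename, map_pow, rename_groupDet ((Subtype.val : S → G) ∘ φ)]
    rfl
  have hPW := iota_pointwise S ι hpoly hι1 hιinj hm1 hmk
  have hINV := iota_inv S ι hpoly hι1 hιinj hm1 hmk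
  have hscott := scott_theorem hιinj hPW
  have hmemS : ∀ h0 : H, ι h0 ∈ S := by
    intro h0
    rw [← hrange]
    exact Set.mem_range_self _
  refine ⟨⟨?_, ?_⟩, ?_, ?_⟩
  · intro a haS b hbS
    obtain ⟨ha', rfl⟩ : ∃ h0, ι h0 = a := by
      rw [← hrange] at haS; exact haS
    obtain ⟨hb', rfl⟩ : ∃ h0, ι h0 = b := by
      rw [← hrange] at hbS; exact hbS
    rcases hscott with hhom | hanti
    · rw [← hhom]; exact hmemS _
    · rw [← hanti]; exact hmemS _
  · intro a haS
    obtain ⟨ha', rfl⟩ : ∃ h0, ι h0 = a := by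
      rw [← hrange] at haS; exact haS
    rw [← hINV ha']
    exact hmemS _
  · exact hscott
  · rcases hscott with hhom | hanti
    · exact ⟨ι, hιinj, hrange, hhom⟩
    · refine ⟨fun h0 => ι h0⁻¹, fun a b hab => inv_injective (hιinj hab), ?_, ?_⟩
      · rw [← hrange]
        ext g
        constructor
        · rintro ⟨h0, rfl⟩; exact ⟨h0⁻¹, rfl⟩
        · rintro ⟨h0, rfl⟩; exact ⟨h0⁻¹, by simp⟩
      · intro h h'
        show ι ((h * h')⁻¹) = ι h⁻¹ * ι h'⁻¹
        rw [mul_inv_rev]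
        exact hanti h'⁻¹ h⁻¹

/-- If `S ⊆ G` contains `e`, `|S| ∣ |G|`, and there are a finite group `H` and a bijection
`φ : H → S` with `φ(e') = e` and `Θ_G(S) = φ̂(Θ(H)^{|G|/|H|})`, then `S` is a subgroup of `G`,
`φ` is a group isomorphism or group anti-isomorphism onto `S`, and `S` is isomorphic to `H`. -/
theorem genGroupDet_eq_pow_imp_subgroup_and_iso {G : Type*} [Group G] [Fintype G]
    (S : Set G) (h1S : (1 : G) ∈ S) (hdvd : Nat.card S ∣ Fintype.card G)
    (H : Type*) [Group H] [Fintype H] (φ : H → S)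
    (hbij : Function.Bijective φ) (h1 : φ 1 = ⟨1, h1S⟩)
    (hdet : genGroupDet ℂ G S =
      MvPolynomial.rename φ ((groupDet ℂ H) ^ (Fintype.card G / Fintype.card H))) :
    ((∀ a ∈ S, ∀ b ∈ S, a * b ∈ S) ∧ ∀ a ∈ S, a⁻¹ ∈ S) ∧
    ((∀ h h' : H, (φ (h * h') : G) = (φ h : G) * (φ h' : G)) ∨
      (∀ h h' : H, (φ (h * h') : G) = (φ h' : G) * (φ h : G))) ∧
    (∃ ψ : H → G, Function.Injective ψ ∧ Set.range ψ = S ∧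
      ∀ h h' : H, ψ (h * h') = ψ h * ψ h') := by
  exact aux_main S h1S hdvd H φ hbij h1 hdet
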